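/- Let g ≥ 1 and let R be a g × g complex symmetric matrix whose real part (the g × g real matrix of entrywise real parts) is negative definite. Then for every z ∈ ℂ^g the theta series Σ_{n ∈ ℤ^g} exp(nᵀ R n + nᵀ z) converges absolutely; i.e., the family n ↦ exp(nᵀ R n + nᵀ z), indexed by n ∈ ℤ^g, is summable. -/

import Mathlib

open Real Finset

private lemma oneD {c B : ℝ} (hc : 0 < c) :
    Summable fun k : ℤ => Real.exp (B * |(k : ℝ)| - c * (k : ℝ) ^ 2) := by
  have h := summable_pow_mul_jacobiTheta₂_term_bound (B / (2 * π))
    (show (0:ℝ) < c / π from div_pos hc pi_pos) 0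
  refine h.congr fun n => ?_
  have hπ : (π : ℝ) ≠ 0 := pi_ne_zero
  push_cast
  rw [pow_zero, one_mul]
  congr 1
  field_simp
  ring

set_option maxHeartbeats 1000000 in
private lemma piProd {h : ℤ → ℝ} (h0 : ∀ k, 0 ≤ h k) (hs : Summable h) (g : ℕ) :
    Summable fun n : Fin g → ℤ => ∏ i, h (n i) := by
  induction g with
  | zero => exact Summable.of_finite
  | succ m ih =>
    have hprod : Summable fun p : ℤ × (Fin m → ℤ) => h p.1 * ∏ i, h (p.2 i) := by
      apply Summable.mul_of_nonneg hs ih (fun k => h0 k)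
      exact fun x => Finset.prod_nonneg fun i _ => h0 _
    have := (Fin.consEquiv fun _ => ℤ).symm.summable_iff.mpr hprod
    refine this.congr fun n => ?_
    show h (n 0) * ∏ i : Fin m, h (n i.succ) = ∏ i, h (n i)
    exact (Fin.prod_univ_succ fun i => h (n i)).symm

private lemma quadSmul {g : ℕ} (M : Matrix (Fin g) (Fin g) ℝ) (a : ℝ) (x : Fin g → ℝ) :
    (∑ i, ∑ j, (a • x) i * M i j * (a • x) j) = a ^ 2 * ∑ i, ∑ j, x i * M i j * x j := by
  rw [Finset.mul_sum]
  refine Finset.sum_congr rfl fun i _ => ?_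
  rw [Finset.mul_sum]
  refine Finset.sum_congr rfl fun j _ => ?_
  simp only [Pi.smul_apply, smul_eq_mul]
  ring

private lemma posdef_bound {g : ℕ} (hg : 1 ≤ g) (M : Matrix (Fin g) (Fin g) ℝ)
    (hM : M.PosDef) :
    ∃ c > 0, ∀ x : Fin g → ℝ, c * ∑ i, x i ^ 2 ≤ ∑ i, ∑ j, x i * M i j * x j := by
  haveI : Nonempty (Fin g) := ⟨⟨0, hg⟩⟩
  have hgpos : (0 : ℝ) < g := by exact_mod_cast Nat.lt_of_lt_of_le Nat.zero_lt_one hg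
  set f : (Fin g → ℝ) → ℝ := fun x => ∑ i, ∑ j, x i * M i j * x j with hf
  have hfval : ∀ x : Fin g → ℝ, x ≠ 0 → 0 < f x := by
    intro x hx
    have := hM.dotProduct_mulVec_pos hx
    simpa [hf, dotProduct, Matrix.mulVec, Finset.mul_sum, mul_assoc] using this
  have hcont : Continuous f := by
    apply continuous_finset_sum
    intro i _
    apply continuous_finset_sum
    intro j _
    exact ((continuous_apply i).mul continuous_const).mul (continuous_apply j)
  have hsph : IsCompact (Metric.sphere (0 : Fin g → ℝ) 1) := isCompact_sphere 0 1
  have hne : (Metric.sphere (0 : Fin g → ℝ) 1).Nonempty := by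
    refine ⟨fun _ => 1, ?_⟩
    rw [mem_sphere_zero_iff_norm]
    simpa using (pi_norm_const (1 : ℝ))
  obtain ⟨u, hu, humin⟩ := hsph.exists_isMinOn hne hcont.continuousOn
  have hu1 : ‖u‖ = 1 := mem_sphere_zero_iff_norm.mp hu
  have hu0 : u ≠ 0 := fun h => by simp [h] at hu1
  set c0 := f u with hc0
  have hc0pos : 0 < c0 := hfval u hu0
  refine ⟨c0 / g, div_pos hc0pos hgpos, ?_⟩
  intro x
  rcases eq_or_ne x 0 with rfl | hx
  · simp [hf]
  · have hnx : 0 < ‖x‖ := norm_pos_iff.mpr hx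
    set y := ‖x‖⁻¹ • x with hy
    have hy1 : ‖y‖ = 1 := by
      rw [hy, norm_smul, norm_inv, norm_norm, inv_mul_cancel₀ hnx.ne']
    have hyx : x = ‖x‖ • y := by
      rw [hy, smul_smul, mul_inv_cancel₀ hnx.ne', one_smul]
    have hfy : c0 ≤ f y := humin (mem_sphere_zero_iff_norm.mpr hy1)
    have hfx : f x = ‖x‖ ^ 2 * f y := by
      conv_lhs => rw [hyx]
      exact quadSmul M ‖x‖ y
    have hsum : ∑ i, x i ^ 2 ≤ (g : ℝ) * ‖x‖ ^ 2 := by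
      calc ∑ i, x i ^ 2 ≤ ∑ _i : Fin g, ‖x‖ ^ 2 := by
            refine Finset.sum_le_sum fun i _ => ?_
            have h1 : ‖x i‖ ≤ ‖x‖ := norm_le_pi_norm x i
            calc x i ^ 2 = ‖x i‖ ^ 2 := by rw [Real.norm_eq_abs, sq_abs]
              _ ≤ ‖x‖ ^ 2 := pow_le_pow_left₀ (norm_nonneg _) h1 2
        _ = (g : ℝ) * ‖x‖ ^ 2 := by simp [Finset.sum_const, nsmul_eq_mul]
    calc c0 / g * ∑ i, x i ^ 2 ≤ c0 / g * ((g : ℝ) * ‖x‖ ^ 2) := by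
          exact mul_le_mul_of_nonneg_left hsum (le_of_lt (div_pos hc0pos hgpos))
      _ = c0 * ‖x‖ ^ 2 := by field_simp
      _ ≤ ‖x‖ ^ 2 * f y := by
          rw [mul_comm]
          exact mul_le_mul_of_nonneg_left hfy (by positivity)
      _ = f x := hfx.symm

/-- **Absolute convergence of the Riemann theta series.**
If `R` is a `g × g` complex symmetric matrix whose real part is negative
definite (i.e. `-Re R` is positive definite), then for every `z ∈ ℂ^g` the
family `n ↦ exp(nᵀ R n + nᵀ z)`, indexed by `n ∈ ℤ^g`, is summable. -/
theorem riemann_theta_series_summable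
    (g : ℕ) (hg : 1 ≤ g) (R : Matrix (Fin g) (Fin g) ℂ)
    (hsymm : R.IsSymm)
    (hneg : (-(R.map Complex.re)).PosDef)
    (z : Fin g → ℂ) :
    Summable (fun n : Fin g → ℤ =>
      Complex.exp ((∑ i, ∑ j, (n i : ℂ) * R i j * (n j : ℂ)) + ∑ i, (n i : ℂ) * z i)) := by
  obtain ⟨c, hc, hq⟩ := posdef_bound hg _ hneg
  set B : ℝ := ∑ j, |(z j).re| with hB
  have hBle : ∀ i, |(z i).re| ≤ B := fun i =>
    Finset.single_le_sum (f := fun j => |(z j).re|) (fun j _ => abs_nonneg _) (Finset.mem_univ i)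
  set h : ℤ → ℝ := fun k => Real.exp (B * |(k : ℝ)| - c * (k : ℝ) ^ 2) with hh
  have hsummable : Summable fun n : Fin g → ℤ => ∏ i, h (n i) :=
    piProd (fun k => Real.exp_nonneg _) (oneD hc) g
  refine Summable.of_norm_bounded hsummable fun n => ?_
  set x : Fin g → ℝ := fun i => (n i : ℝ) with hx
  -- real part of the exponent
  have hre : ((∑ i, ∑ j, (n i : ℂ) * R i j * (n j : ℂ)) + ∑ i, (n i : ℂ) * z i).re
      = (∑ i, ∑ j, x i * (R i j).re * x j) + ∑ i, x i * (z i).re := by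
    simp only [Complex.add_re, Complex.re_sum, Complex.mul_re, Complex.intCast_re,
      Complex.intCast_im, hx]
    congr 1
    · refine Finset.sum_congr rfl fun i _ => Finset.sum_congr rfl fun j _ => ?_
      ring
    · refine Finset.sum_congr rfl fun i _ => ?_
      ring
  have hquad : (∑ i, ∑ j, x i * (R i j).re * x j) ≤ -(c * ∑ i, x i ^ 2) := by
    have := hq x
    have heq : (∑ i, ∑ j, x i * ((-(R.map Complex.re)) i j) * x j)
        = -∑ i, ∑ j, x i * (R i j).re * x j := by
      rw [← Finset.sum_neg_distrib]
      refine Finset.sum_congr rfl fun i _ => ?_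
      rw [← Finset.sum_neg_distrib]
      refine Finset.sum_congr rfl fun j _ => ?_
      simp [Matrix.neg_apply, Matrix.map_apply, mul_neg, neg_mul]
    rw [heq] at this
    linarith
  have hlin : (∑ i, x i * (z i).re) ≤ ∑ i, B * |x i| := by
    refine Finset.sum_le_sum fun i _ => ?_
    calc x i * (z i).re ≤ |x i * (z i).re| := le_abs_self _
      _ = |x i| * |(z i).re| := abs_mul _ _
      _ ≤ |x i| * B := mul_le_mul_of_nonneg_left (hBle i) (abs_nonneg _)
      _ = B * |x i| := mul_comm _ _
  have hbound : ((∑ i, ∑ j, (n i : ℂ) * R i j * (n j : ℂ)) + ∑ i, (n i : ℂ) * z i).re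
      ≤ ∑ i, (B * |x i| - c * x i ^ 2) := by
    rw [hre, Finset.sum_sub_distrib]
    have : c * ∑ i, x i ^ 2 = ∑ i, c * x i ^ 2 := Finset.mul_sum _ _ _
    rw [this] at hquad
    linarith
  calc ‖Complex.exp ((∑ i, ∑ j, (n i : ℂ) * R i j * (n j : ℂ)) + ∑ i, (n i : ℂ) * z i)‖
      = Real.exp ((((∑ i, ∑ j, (n i : ℂ) * R i j * (n j : ℂ)) + ∑ i, (n i : ℂ) * z i)).re) := by
        rw [Complex.norm_exp]
    _ ≤ Real.exp (∑ i, (B * |x i| - c * x i ^ 2)) := Real.exp_le_exp.mpr hbound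
    _ = ∏ i, h (n i) := by
        rw [Real.exp_sum]
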